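/- Let φ over Σ = C ∪ U be either a safetyLTL formula (a pure-future NNF formula whose only temporal operators are wX and R) or a formula of the form G α with α pure past. Then φ is realizable over finite traces if and only if for every U0 ⊆ U there exists C0 ⊆ C such that the length-1 trace ⟨U0 ∪ C0⟩ is a model of φ. -/

import Mathlib

/-- LTL+P formulas in negation normal form. -/
inductive LTLP (A : Type) : Type where
  | atom : A → LTLP A
  | natom : A → LTLP A
  | and : LTLP A → LTLP A → LTLP A
  | or : LTLP A → LTLP A → LTLP A
  | next : LTLP A → LTLP A            -- X
  | wnext : LTLP A → LTLP A           -- wX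
  | until_ : LTLP A → LTLP A → LTLP A -- U
  | release : LTLP A → LTLP A → LTLP A -- R
  | yest : LTLP A → LTLP A            -- Y
  | wyest : LTLP A → LTLP A           -- wY
  | since : LTLP A → LTLP A → LTLP A  -- S
  | trig : LTLP A → LTLP A → LTLP A   -- T

variable {A : Type}

/-- Satisfaction of an LTL+P formula at position `i` of a finite trace `σ`. -/
def finSat (σ : List (Set A)) : LTLP A → ℕ → Prop
  | .atom p, i => p ∈ σ.getD i ∅
  | .natom p, i => p ∉ σ.getD i ∅
  | .and φ ψ, i => finSat σ φ i ∧ finSat σ ψ i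
  | .or φ ψ, i => finSat σ φ i ∨ finSat σ ψ i
  | .next φ, i => i + 1 < σ.length ∧ finSat σ φ (i+1)
  | .wnext φ, i => i + 1 = σ.length ∨ finSat σ φ (i+1)
  | .until_ φ ψ, i => ∃ j, i ≤ j ∧ j < σ.length ∧ finSat σ ψ j ∧
      ∀ k, i ≤ k → k < j → finSat σ φ k
  | .release φ ψ, i => (∀ j, i ≤ j → j < σ.length → finSat σ ψ j) ∨
      ∃ k, i ≤ k ∧ k < σ.length ∧ finSat σ φ k ∧ ∀ j, i ≤ j → j ≤ k → finSat σ ψ j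
  | .yest φ, i => 0 < i ∧ finSat σ φ (i-1)
  | .wyest φ, i => i = 0 ∨ finSat σ φ (i-1)
  | .since φ ψ, i => ∃ j, j ≤ i ∧ finSat σ ψ j ∧ ∀ k, j < k → k ≤ i → finSat σ φ k
  | .trig φ ψ, i => (∀ j, j ≤ i → finSat σ ψ j) ∨
      ∃ k, k ≤ i ∧ finSat σ φ k ∧ ∀ j, k ≤ j → j ≤ i → finSat σ ψ j

/-- Satisfaction of an LTL+P formula at position `i` of an infinite trace `σ`. -/
def infSat (σ : ℕ → Set A) : LTLP A → ℕ → Prop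
  | .atom p, i => p ∈ σ i
  | .natom p, i => p ∉ σ i
  | .and φ ψ, i => infSat σ φ i ∧ infSat σ ψ i
  | .or φ ψ, i => infSat σ φ i ∨ infSat σ ψ i
  | .next φ, i => infSat σ φ (i+1)
  | .wnext φ, i => infSat σ φ (i+1)
  | .until_ φ ψ, i => ∃ j, i ≤ j ∧ infSat σ ψ j ∧ ∀ k, i ≤ k → k < j → infSat σ φ k
  | .release φ ψ, i => (∀ j, i ≤ j → infSat σ ψ j) ∨
      ∃ k, i ≤ k ∧ infSat σ φ k ∧ ∀ j, i ≤ j → j ≤ k → infSat σ ψ j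
  | .yest φ, i => 0 < i ∧ infSat σ φ (i-1)
  | .wyest φ, i => i = 0 ∨ infSat σ φ (i-1)
  | .since φ ψ, i => ∃ j, j ≤ i ∧ infSat σ ψ j ∧ ∀ k, j < k → k ≤ i → infSat σ φ k
  | .trig φ ψ, i => (∀ j, j ≤ i → infSat σ ψ j) ∨
      ∃ k, k ≤ i ∧ infSat σ φ k ∧ ∀ j, k ≤ j → j ≤ i → infSat σ ψ j

/-- Pure-future formulas: no past operators. -/
def pureFuture : LTLP A → Prop
  | .atom _ | .natom _ => True
  | .and φ ψ | .or φ ψ | .until_ φ ψ | .release φ ψ => pureFuture φ ∧ pureFuture ψ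
  | .next φ | .wnext φ => pureFuture φ
  | .yest _ | .wyest _ | .since _ _ | .trig _ _ => False

/-- Pure-past formulas: no future operators. -/
def purePast : LTLP A → Prop
  | .atom _ | .natom _ => True
  | .and φ ψ | .or φ ψ | .since φ ψ | .trig φ ψ => purePast φ ∧ purePast ψ
  | .yest φ | .wyest φ => purePast φ
  | .next _ | .wnext _ | .until_ _ _ | .release _ _ => False

/-- safetyLTL: pure-future NNF formulas whose only temporal operators are wX and R. -/
def isSafetyLTL : LTLP A → Prop
  | .atom _ | .natom _ => True
  | .and φ ψ | .or φ ψ | .release φ ψ => isSafetyLTL φ ∧ isSafetyLTL ψ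
  | .wnext φ => isSafetyLTL φ
  | .next _ | .until_ _ _ | .yest _ | .wyest _ | .since _ _ | .trig _ _ => False

/-- cosafetyLTL: pure-future NNF formulas whose only temporal operators are X and U. -/
def isCosafetyLTL : LTLP A → Prop
  | .atom _ | .natom _ => True
  | .and φ ψ | .or φ ψ | .until_ φ ψ => isCosafetyLTL φ ∧ isCosafetyLTL ψ
  | .next φ => isCosafetyLTL φ
  | .wnext _ | .release _ _ | .yest _ | .wyest _ | .since _ _ | .trig _ _ => False

/-- ⊥ := p ∧ ¬p (for some proposition letter p). -/
def LTLP.fls (p : A) : LTLP A := .and (.atom p) (.natom p)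
/-- ⊤ := p ∨ ¬p (for some proposition letter p). -/
def LTLP.tru (p : A) : LTLP A := .or (.atom p) (.natom p)
/-- G φ := ⊥ R φ. -/
def LTLP.G (p : A) (φ : LTLP A) : LTLP A := .release (LTLP.fls p) φ
/-- F φ := ⊤ U φ. -/
def LTLP.F (p : A) (φ : LTLP A) : LTLP A := .until_ (LTLP.tru p) φ

/-- Relabelling of proposition letters. -/
def LTLP.map {A B : Type} (h : A → B) : LTLP A → LTLP B
  | .atom p => .atom (h p)
  | .natom p => .natom (h p)
  | .and φ ψ => .and (φ.map h) (ψ.map h)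
  | .or φ ψ => .or (φ.map h) (ψ.map h)
  | .next φ => .next (φ.map h)
  | .wnext φ => .wnext (φ.map h)
  | .until_ φ ψ => .until_ (φ.map h) (ψ.map h)
  | .release φ ψ => .release (φ.map h) (ψ.map h)
  | .yest φ => .yest (φ.map h)
  | .wyest φ => .wyest (φ.map h)
  | .since φ ψ => .since (φ.map h) (ψ.map h)
  | .trig φ ψ => .trig (φ.map h) (ψ.map h)

/-- The translation f over the alphabet extended with the fresh letter `endt`
(encoded as `none`, with letters of Σ encoded as `some p`). -/
def ftr : LTLP A → LTLP (Option A)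
  | .atom p => .atom (some p)
  | .natom p => .natom (some p)
  | .and φ ψ => .and (ftr φ) (ftr ψ)
  | .or φ ψ => .or (ftr φ) (ftr ψ)
  | .next φ => .next (.and (.natom none) (ftr φ))
  | .wnext φ => .next (.or (.atom none) (ftr φ))  -- X(¬endt → f φ)
  | .until_ φ ψ => .until_ (ftr φ) (.and (.natom none) (ftr ψ))
  | .release φ ψ => .or (.until_ (ftr ψ) (.and (ftr ψ) (.next (.atom none))))
      (.until_ (ftr ψ) (.and (ftr φ) (ftr ψ)))
  | .yest φ => .yest (ftr φ)
  | .wyest φ => .wyest (ftr φ)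
  | .since φ ψ => .since (ftr φ) (ftr ψ)
  | .trig φ ψ => .trig (ftr φ) (ftr ψ)

/-- g(φ) := ¬endt ∧ f(φ) ∧ ((¬endt) U endt). -/
def gtr (φ : LTLP A) : LTLP (Option A) :=
  .and (.natom none) (.and (ftr φ) (.until_ (.natom none) (.atom none)))

/-- The outcome trace res(s,𝒰) of a (Mealy, Environment-first) strategy. -/
def resTr {C U : Type} (s : List (Set U) → Set C) (env : ℕ → Set U) : ℕ → Set (C ⊕ U) :=
  fun i => Sum.elim (fun c => c ∈ s ((List.range (i+1)).map env)) (fun u => u ∈ env i)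

/-- Realizability over infinite traces. -/
def RealizableInf {C U : Type} (φ : LTLP (C ⊕ U)) : Prop :=
  ∃ s : List (Set U) → Set C, ∀ env : ℕ → Set U, infSat (resTr s env) φ 0

/-- Realizability over finite traces. -/
def RealizableFin {C U : Type} (φ : LTLP (C ⊕ U)) : Prop :=
  ∃ s : List (Set U) → Set C, ∀ env : ℕ → Set U, ∃ k : ℕ,
    finSat ((List.range (k+1)).map (resTr s env)) φ 0


lemma take_getD {B : Type} (σ : List (Set B)) {m i : ℕ} (h : i < m) :
    (σ.take m).getD i ∅ = σ.getD i ∅ := by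
  simp [List.getD_eq_getElem?_getD, List.getElem?_take, h]

lemma lemA (σ : List (Set A)) (m : ℕ) (hm : m ≤ σ.length) :
    ∀ φ : LTLP A, isSafetyLTL φ → ∀ i, i < m → finSat σ φ i → finSat (σ.take m) φ i := by
  have hlen : (σ.take m).length = m := by
    simp [List.length_take, Nat.min_eq_left hm]
  intro φ
  induction φ with
  | atom p => intro _ i hi h; simpa [finSat, List.getD_eq_getElem?_getD, List.getElem?_take, hi] using h
  | natom p => intro _ i hi h; simpa [finSat, List.getD_eq_getElem?_getD, List.getElem?_take, hi] using h
  | and φ ψ ihφ ihψ =>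
      intro hs i hi h
      exact ⟨ihφ hs.1 i hi h.1, ihψ hs.2 i hi h.2⟩
  | or φ ψ ihφ ihψ =>
      intro hs i hi h
      exact h.elim (fun h => Or.inl (ihφ hs.1 i hi h)) (fun h => Or.inr (ihψ hs.2 i hi h))
  | wnext φ ih =>
      intro hs i hi h
      rcases h with h | h
      · left
        have : m = i + 1 := le_antisymm (h ▸ hm) hi
        rw [hlen, this]
      · by_cases hi1 : i + 1 < m
        · exact Or.inr (ih hs (i+1) hi1 h)
        · left
          rw [hlen]
          omega
  | release φ ψ ihφ ihψ =>
      intro hs i hi h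
      rcases h with hall | ⟨k, hik, hkl, hφk, hψ⟩
      · left
        intro j hij hj
        rw [hlen] at hj
        exact ihψ hs.2 j hj (hall j hij (lt_of_lt_of_le hj hm))
      · by_cases hk : k < m
        · right
          refine ⟨k, hik, by rw [hlen]; exact hk, ihφ hs.1 k hk hφk, fun j hij hjk => ?_⟩
          exact ihψ hs.2 j (lt_of_le_of_lt hjk hk) (hψ j hij hjk)
        · left
          intro j hij hj
          rw [hlen] at hj
          exact ihψ hs.2 j hj (hψ j hij (by omega))
  | next φ ih => intro hs; exact hs.elim
  | until_ φ ψ _ _ => intro hs; exact hs.elim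
  | yest φ _ => intro hs; exact hs.elim
  | wyest φ _ => intro hs; exact hs.elim
  | since φ ψ _ _ => intro hs; exact hs.elim
  | trig φ ψ _ _ => intro hs; exact hs.elim

lemma lemB (σ : List (Set A)) (m : ℕ) :
    ∀ α : LTLP A, purePast α → ∀ i, i < m → finSat σ α i → finSat (σ.take m) α i := by
  intro α
  induction α with
  | atom p => intro _ i hi h; simpa [finSat, List.getD_eq_getElem?_getD, List.getElem?_take, hi] using h
  | natom p => intro _ i hi h; simpa [finSat, List.getD_eq_getElem?_getD, List.getElem?_take, hi] using h
  | and φ ψ ihφ ihψ =>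
      intro hs i hi h
      exact ⟨ihφ hs.1 i hi h.1, ihψ hs.2 i hi h.2⟩
  | or φ ψ ihφ ihψ =>
      intro hs i hi h
      exact h.elim (fun h => Or.inl (ihφ hs.1 i hi h)) (fun h => Or.inr (ihψ hs.2 i hi h))
  | yest φ ih =>
      intro hs i hi h
      exact ⟨h.1, ih hs (i-1) (by omega) h.2⟩
  | wyest φ ih =>
      intro hs i hi h
      rcases h with h | h
      · exact Or.inl h
      · exact Or.inr (ih hs (i-1) (by omega) h)
  | since φ ψ ihφ ihψ =>
      intro hs i hi h
      obtain ⟨j, hji, hψj, hall⟩ := h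
      exact ⟨j, hji, ihψ hs.2 j (by omega) hψj,
        fun k hjk hki => ihφ hs.1 k (by omega) (hall k hjk hki)⟩
  | trig φ ψ ihφ ihψ =>
      intro hs i hi h
      rcases h with hall | ⟨k, hki, hφk, hall⟩
      · exact Or.inl (fun j hj => ihψ hs.2 j (by omega) (hall j hj))
      · exact Or.inr ⟨k, hki, ihφ hs.1 k (by omega) hφk,
          fun j hkj hji => ihψ hs.2 j (by omega) (hall j hkj hji)⟩
  | next φ _ => intro hs; exact hs.elim
  | wnext φ _ => intro hs; exact hs.elim
  | until_ φ ψ _ _ => intro hs; exact hs.elim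
  | release φ ψ _ _ => intro hs; exact hs.elim

/-- A safetyLTL formula, or `G α` with `α` pure past, over `Σ = C ∪ U`, is
realizable over finite traces iff for every `U0 ⊆ U` there is `C0 ⊆ C` such that
the length-1 trace `⟨U0 ∪ C0⟩` is a model of `φ`. -/
theorem stmt14 {C U : Type} [Fintype C] [Fintype U] (φ : LTLP (C ⊕ U))
    (hφ : isSafetyLTL φ ∨
      ∃ (p : C ⊕ U) (α : LTLP (C ⊕ U)), purePast α ∧ φ = LTLP.G p α) :
    RealizableFin φ ↔
      ∀ U0 : Set U, ∃ C0 : Set C,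
        finSat [Sum.elim (fun c => c ∈ C0) (fun u => u ∈ U0)] φ 0 := by
  constructor
  · rintro ⟨s, hs⟩ U0
    set env : ℕ → Set U := fun _ => U0 with henv
    obtain ⟨k, hk⟩ := hs env
    refine ⟨s [U0], ?_⟩
    set trace : List (Set (C ⊕ U)) := (List.range (k+1)).map (resTr s env) with htr
    have hlen : trace.length = k + 1 := by simp [htr]
    have heq : trace.take 1 =
        [Sum.elim (fun c => c ∈ s [U0]) (fun u => u ∈ U0)] := by
      rw [htr, ← List.map_take, List.take_range]
      have h1 : min 1 (k+1) = 1 := by omega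
      rw [h1, show List.range 1 = [0] from rfl, List.map_singleton]
      rfl
    rcases hφ with hsafe | ⟨p, α, hα, rfl⟩
    · have := lemA trace 1 (by omega) φ hsafe 0 one_pos hk
      rw [heq] at this
      exact this
    · have hα0 : finSat trace α 0 := by
        rcases hk with hall | ⟨k', _, _, hφk, _⟩
        · exact hall 0 le_rfl (by omega)
        · exact absurd hφk.1 hφk.2
      left
      intro j _ hj
      replace hj : j < 1 := hj
      interval_cases j
      have := lemB trace 1 α hα 0 one_pos hα0
      rw [heq] at this
      exact this
  · intro h
    choose c0 hc0 using h
    refine ⟨fun l => c0 (l.getD 0 ∅), fun env => ⟨0, ?_⟩⟩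
    have h1 : (List.range (0+1)).map (resTr (fun l => c0 (l.getD 0 ∅)) env) =
        [Sum.elim (fun c => c ∈ c0 (env 0)) (fun u => u ∈ env 0)] := by
      rw [show List.range 1 = [0] from rfl, List.map_singleton]
      rfl
    rw [h1]
    exact hc0 (env 0)
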